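/- Let S and A be finite nonempty sets, r¹, r² : S × A × A → ℝ, λ(s'|s,a¹,a²) ≥ 0 for s' ≠ s with total rate Λ(s,a¹,a²) := ∑_{s'≠s} λ(s'|s,a¹,a²), and γ > 0. Let (Δ_n) be positive reals with Δ_n → 0 and Δ_n·Λ ≤ 1 everywhere, and for each n let σ¹_n, σ²_n : S → Δ(A) be mixed stationary strategies and V¹_n, V²_n : S → ℝ be functions satisfying, for all s ∈ S: V¹_n(s) = max_{a∈A} ( Δ_n·r¹(s,a,σ²_n) + e^{−γΔ_n}·∑_{s'} p_{Δ_n}(s'|s,a,σ²_n)·V¹_n(s') ), V¹_n(s) = Δ_n·r¹(s,σ¹_n,σ²_n) + e^{−γΔ_n}·∑_{s'} p_{Δ_n}(s'|s,σ¹_n,σ²_n)·V¹_n(s'), and the symmetric pair of equations for V²_n with the maximum over player 2's action a and r², λ evaluated at (σ¹_n, a). Suppose (σ¹_n, σ²_n, V¹_n, V²_n) converges pointwise to (σ¹*, σ²*, V¹*, V²*). Then the limit satisfies the continuous-time coupled optimality equations: for all s ∈ S, γ·V¹*(s) = max_{a∈A} ( r¹(s,a,σ²*) + ∑_{s'≠s}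 λ(s'|s,a,σ²*)·( V¹*(s') − V¹*(s) ) ) and γ·V¹*(s) = r¹(s,σ¹*,σ²*) + ∑_{s'≠s} λ(s'|s,σ¹*,σ²*)·( V¹*(s') − V¹*(s) ), together with the symmetric pair of equations for V²* with the maximum over player 2's action. -/

import Mathlib

noncomputable section

/-- Payoff `r(s,a,σ²)` of a pure action `a` of player 1 against the mixed
action `σ²(·|s)` of player 2. -/
def rMix2 {S A : Type*} [Fintype A]
    (r : S → A → A → ℝ) (σ2 : S → A → ℝ) (s : S) (a : A) : ℝ :=
  ∑ a2, r s a a2 * σ2 s a2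

/-- Payoff `r(s,σ¹,a)` of a pure action `a` of player 2 against the mixed
action `σ¹(·|s)` of player 1. -/
def rMix1 {S A : Type*} [Fintype A]
    (r : S → A → A → ℝ) (σ1 : S → A → ℝ) (s : S) (a : A) : ℝ :=
  ∑ a1, r s a1 a * σ1 s a1

/-- Payoff `r(s,σ¹,σ²)` under the pair of mixed actions. -/
def rMixBoth {S A : Type*} [Fintype A]
    (r : S → A → A → ℝ) (σ1 σ2 : S → A → ℝ) (s : S) : ℝ :=
  ∑ a1, ∑ a2, r s a1 a2 * σ1 s a1 * σ2 s a2

/-- Transition rate `λ(s'|s,a,σ²)` of a pure action `a` of player 1 against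
the mixed action `σ²(·|s)` of player 2. -/
def lamMix2 {S A : Type*} [Fintype A]
    (lam : S → S → A → A → ℝ) (σ2 : S → A → ℝ) (s' s : S) (a : A) : ℝ :=
  ∑ a2, lam s' s a a2 * σ2 s a2

/-- Transition rate `λ(s'|s,σ¹,a)` of a pure action `a` of player 2 against
the mixed action `σ¹(·|s)` of player 1. -/
def lamMix1 {S A : Type*} [Fintype A]
    (lam : S → S → A → A → ℝ) (σ1 : S → A → ℝ) (s' s : S) (a : A) : ℝ :=
  ∑ a1, lam s' s a1 a * σ1 s a1

/-- Transition rate `λ(s'|s,σ¹,σ²)` under the pair of mixed actions. -/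
def lamMixBoth {S A : Type*} [Fintype A]
    (lam : S → S → A → A → ℝ) (σ1 σ2 : S → A → ℝ) (s' s : S) : ℝ :=
  ∑ a1, ∑ a2, lam s' s a1 a2 * σ1 s a1 * σ2 s a2

open Filter Topology

lemma tendsto_finset_sup'_aux {ι : Type*} {t : Finset ι} (ht : t.Nonempty)
    (f : ℕ → ι → ℝ) (g : ι → ℝ)
    (h : ∀ i, Tendsto (fun n => f n i) atTop (nhds (g i))) :
    Tendsto (fun n => t.sup' ht (f n)) atTop (nhds (t.sup' ht g)) := by
  induction ht using Finset.Nonempty.cons_induction with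
  | singleton a => simp only [Finset.sup'_singleton]; exact h a
  | cons a s ha hs ih =>
      simp only [Finset.sup'_cons hs]
      exact (h a).max ih

lemma sup_limit_aux {S A : Type*} [Fintype S] [DecidableEq S] [Fintype A] [Nonempty A]
    (γ : ℝ) (hγ : 0 < γ) (Δ : ℕ → ℝ) (hΔpos : ∀ n, 0 < Δ n)
    (hΔ0 : Tendsto Δ atTop (nhds 0))
    (R : ℕ → A → ℝ) (Rs : A → ℝ) (L : ℕ → A → S → ℝ) (Ls : A → S → ℝ)
    (V : ℕ → S → ℝ) (Vs : S → ℝ) (s : S)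
    (heq : ∀ n, V n s = Finset.univ.sup' Finset.univ_nonempty (fun a : A =>
      Δ n * R n a + Real.exp (-(γ * Δ n)) *
        ((1 - Δ n * ∑ s' ∈ Finset.univ.erase s, L n a s') * V n s +
          ∑ s' ∈ Finset.univ.erase s, Δ n * L n a s' * V n s')))
    (hR : ∀ a, Tendsto (fun n => R n a) atTop (nhds (Rs a)))
    (hL : ∀ a s', Tendsto (fun n => L n a s') atTop (nhds (Ls a s')))
    (hV : ∀ s', Tendsto (fun n => V n s') atTop (nhds (Vs s'))) :
    γ * Vs s = Finset.univ.sup' Finset.univ_nonempty (fun a : A =>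
      Rs a + ∑ s' ∈ Finset.univ.erase s, Ls a s' * (Vs s' - Vs s)) := by
  set e : ℕ → ℝ := fun n => Real.exp (-(γ * Δ n)) with he_def
  set G : ℕ → A → ℝ := fun n a =>
    R n a + e n * ∑ s' ∈ Finset.univ.erase s, L n a s' * (V n s' - V n s) with hG_def
  -- Step 1: algebraic identity per n
  have key : ∀ n, (1 - e n) / Δ n * V n s =
      Finset.univ.sup' Finset.univ_nonempty (G n) := by
    intro n
    have h1 : ∀ a : A,
        Δ n * R n a + e n *
          ((1 - Δ n * ∑ s' ∈ Finset.univ.erase s, L n a s') * V n s +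
            ∑ s' ∈ Finset.univ.erase s, Δ n * L n a s' * V n s')
        = Δ n * G n a + e n * V n s := by
      intro a
      have hsum1 : ∑ s' ∈ Finset.univ.erase s, Δ n * L n a s' * V n s'
          = Δ n * ∑ s' ∈ Finset.univ.erase s, L n a s' * V n s' := by
        rw [Finset.mul_sum]; apply Finset.sum_congr rfl; intros; ring
      have hsum2 : ∑ s' ∈ Finset.univ.erase s, L n a s' * (V n s' - V n s)
          = (∑ s' ∈ Finset.univ.erase s, L n a s' * V n s')
            - (∑ s' ∈ Finset.univ.erase s, L n a s') * V n s := by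
        rw [Finset.sum_mul, ← Finset.sum_sub_distrib]
        apply Finset.sum_congr rfl; intros; ring
      simp only [hG_def]
      rw [hsum1, hsum2]; ring
    have h2 : V n s = Finset.univ.sup' Finset.univ_nonempty
        (fun a : A => Δ n * G n a + e n * V n s) := by
      conv_lhs => rw [heq n]
      exact Finset.sup'_congr _ rfl (fun a _ => (h1 a))
    have h3 : Finset.univ.sup' Finset.univ_nonempty
        (fun a : A => Δ n * G n a + e n * V n s)
        = Δ n * Finset.univ.sup' Finset.univ_nonempty (G n) + e n * V n s := by
      have := Finset.comp_sup'_eq_sup'_comp (α := ℝ) (γ := ℝ)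
        (Finset.univ_nonempty) (f := G n)
        (g := fun x => Δ n * x + e n * V n s)
        (fun x y => by
          rw [mul_max_of_nonneg _ _ (hΔpos n).le, max_add_add_right])
      rw [show (fun a : A => Δ n * G n a + e n * V n s)
          = ((fun x => Δ n * x + e n * V n s) ∘ G n) from rfl, ← this]
    have h4 : V n s = Δ n * Finset.univ.sup' Finset.univ_nonempty (G n)
        + e n * V n s := h2.trans h3
    have hΔne : Δ n ≠ 0 := (hΔpos n).ne'
    field_simp
    linear_combination h4
  -- Step 2: (1 - e n)/Δ n → γ
  have hslope : Tendsto (fun n => (1 - e n) / Δ n) atTop (nhds γ) := by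
    have hf : HasDerivAt (fun x : ℝ => 1 - Real.exp (-(γ * x))) γ 0 := by
      have h0 : HasDerivAt (fun x : ℝ => -(γ * x)) (-γ) 0 := by
        exact (((hasDerivAt_id (0 : ℝ)).const_mul γ).neg).congr_deriv (by simp)
      have h1 := h0.exp
      have h2 := h1.const_sub 1
      exact h2.congr_deriv (by simp)
    have hΔne : Tendsto Δ atTop (𝓝[≠] (0 : ℝ)) := by
      rw [tendsto_nhdsWithin_iff]
      exact ⟨hΔ0, Filter.Eventually.of_forall fun n => (hΔpos n).ne'⟩
    have := (hasDerivAt_iff_tendsto_slope.mp hf).comp hΔne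
    refine this.congr fun n => ?_
    simp [slope_def_field, he_def]
  have hLHS : Tendsto (fun n => (1 - e n) / Δ n * V n s) atTop (nhds (γ * Vs s)) :=
    hslope.mul (hV s)
  -- e n → 1
  have he1 : Tendsto e atTop (nhds 1) := by
    have h0 : Tendsto (fun n => -(γ * Δ n)) atTop (nhds 0) := by
      simpa using (hΔ0.const_mul γ).neg
    simpa [Function.comp_def] using (Real.continuous_exp.continuousAt.tendsto).comp h0
  have hG : ∀ a : A, Tendsto (fun n => G n a) atTop
      (nhds (Rs a + 1 * ∑ s' ∈ Finset.univ.erase s, Ls a s' * (Vs s' - Vs s))) := by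
    intro a
    exact (hR a).add (he1.mul (tendsto_finset_sum _ fun s' _ =>
      (hL a s').mul ((hV s').sub (hV s))))
  have hRHS : Tendsto (fun n => Finset.univ.sup' Finset.univ_nonempty (G n)) atTop
      (nhds (Finset.univ.sup' Finset.univ_nonempty (fun a : A =>
        Rs a + 1 * ∑ s' ∈ Finset.univ.erase s, Ls a s' * (Vs s' - Vs s)))) :=
    tendsto_finset_sup'_aux _ _ _ hG
  have := tendsto_nhds_unique (hLHS.congr key) hRHS
  rw [this]
  exact Finset.sup'_congr _ rfl (fun a _ => by ring)

/-- Convergence of Nash equilibria of the discretized two-player general-sum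
game to an equilibrium of the continuous-time game: if for each `n` the
strategy pair `(σ¹_n, σ²_n)` and value functions `(V¹_n, V²_n)` satisfy the
discrete-time Nash optimality and evaluation equations with increment `Δ_n`
(with transition probabilities `p_Δ(s'|s,·) = Δ·λ(s'|s,·)` for `s' ≠ s` and
`p_Δ(s|s,·) = 1 − Δ·Λ(s,·)`), `Δ_n → 0`, and everything converges pointwise
to `(σ¹*, σ²*, V¹*, V²*)`, then the limit satisfies the continuous-time
coupled optimality equations characterizing a Nash equilibrium. -/
theorem nash_equilibrium_discretization_limit
    {S A : Type*} [Fintype S] [Nonempty S] [DecidableEq S]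
    [Fintype A] [Nonempty A]
    (r1 r2 : S → A → A → ℝ) (lam : S → S → A → A → ℝ)
    (hlam : ∀ s' s a1 a2, s' ≠ s → 0 ≤ lam s' s a1 a2)
    (γ : ℝ) (hγ : 0 < γ)
    (Δ : ℕ → ℝ) (hΔpos : ∀ n, 0 < Δ n)
    (hΔ0 : Filter.Tendsto Δ Filter.atTop (nhds 0))
    (hΔlam : ∀ n s a1 a2,
      Δ n * (∑ s' ∈ Finset.univ.erase s, lam s' s a1 a2) ≤ 1)
    (σ1 σ2 : ℕ → S → A → ℝ)
    (hσ1 : ∀ n s, (∀ a, 0 ≤ σ1 n s a) ∧ ∑ a, σ1 n s a = 1)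
    (hσ2 : ∀ n s, (∀ a, 0 ≤ σ2 n s a) ∧ ∑ a, σ2 n s a = 1)
    (V1 V2 : ℕ → S → ℝ)
    (hV1opt : ∀ n, ∀ s : S, V1 n s =
      Finset.univ.sup' Finset.univ_nonempty (fun a : A =>
        Δ n * rMix2 r1 (σ2 n) s a + Real.exp (-(γ * Δ n)) *
          ((1 - Δ n * ∑ s' ∈ Finset.univ.erase s,
              lamMix2 lam (σ2 n) s' s a) * V1 n s +
            ∑ s' ∈ Finset.univ.erase s,
              Δ n * lamMix2 lam (σ2 n) s' s a * V1 n s')))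
    (hV1eval : ∀ n, ∀ s : S, V1 n s =
      Δ n * rMixBoth r1 (σ1 n) (σ2 n) s + Real.exp (-(γ * Δ n)) *
        ((1 - Δ n * ∑ s' ∈ Finset.univ.erase s,
            lamMixBoth lam (σ1 n) (σ2 n) s' s) * V1 n s +
          ∑ s' ∈ Finset.univ.erase s,
            Δ n * lamMixBoth lam (σ1 n) (σ2 n) s' s * V1 n s'))
    (hV2opt : ∀ n, ∀ s : S, V2 n s =
      Finset.univ.sup' Finset.univ_nonempty (fun a : A =>
        Δ n * rMix1 r2 (σ1 n) s a + Real.exp (-(γ * Δ n)) *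
          ((1 - Δ n * ∑ s' ∈ Finset.univ.erase s,
              lamMix1 lam (σ1 n) s' s a) * V2 n s +
            ∑ s' ∈ Finset.univ.erase s,
              Δ n * lamMix1 lam (σ1 n) s' s a * V2 n s')))
    (hV2eval : ∀ n, ∀ s : S, V2 n s =
      Δ n * rMixBoth r2 (σ1 n) (σ2 n) s + Real.exp (-(γ * Δ n)) *
        ((1 - Δ n * ∑ s' ∈ Finset.univ.erase s,
            lamMixBoth lam (σ1 n) (σ2 n) s' s) * V2 n s +
          ∑ s' ∈ Finset.univ.erase s,
            Δ n * lamMixBoth lam (σ1 n) (σ2 n) s' s * V2 n s'))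
    (σ1s σ2s : S → A → ℝ) (V1s V2s : S → ℝ)
    (hσ1conv : ∀ s a, Filter.Tendsto (fun n => σ1 n s a)
      Filter.atTop (nhds (σ1s s a)))
    (hσ2conv : ∀ s a, Filter.Tendsto (fun n => σ2 n s a)
      Filter.atTop (nhds (σ2s s a)))
    (hV1conv : ∀ s, Filter.Tendsto (fun n => V1 n s)
      Filter.atTop (nhds (V1s s)))
    (hV2conv : ∀ s, Filter.Tendsto (fun n => V2 n s)
      Filter.atTop (nhds (V2s s))) :
    (∀ s : S, γ * V1s s =
      Finset.univ.sup' Finset.univ_nonempty (fun a : A =>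
        rMix2 r1 σ2s s a + ∑ s' ∈ Finset.univ.erase s,
          lamMix2 lam σ2s s' s a * (V1s s' - V1s s))) ∧
    (∀ s : S, γ * V1s s =
      rMixBoth r1 σ1s σ2s s + ∑ s' ∈ Finset.univ.erase s,
        lamMixBoth lam σ1s σ2s s' s * (V1s s' - V1s s)) ∧
    (∀ s : S, γ * V2s s =
      Finset.univ.sup' Finset.univ_nonempty (fun a : A =>
        rMix1 r2 σ1s s a + ∑ s' ∈ Finset.univ.erase s,
          lamMix1 lam σ1s s' s a * (V2s s' - V2s s))) ∧
    (∀ s : S, γ * V2s s =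
      rMixBoth r2 σ1s σ2s s + ∑ s' ∈ Finset.univ.erase s,
        lamMixBoth lam σ1s σ2s s' s * (V2s s' - V2s s)) := by
  refine ⟨?_, ?_, ?_, ?_⟩
  · intro s
    exact sup_limit_aux γ hγ Δ hΔpos hΔ0
      (fun n a => rMix2 r1 (σ2 n) s a) (fun a => rMix2 r1 σ2s s a)
      (fun n a s' => lamMix2 lam (σ2 n) s' s a)
      (fun a s' => lamMix2 lam σ2s s' s a)
      V1 V1s s (fun n => hV1opt n s)
      (fun a => by
        unfold rMix2
        exact tendsto_finset_sum _ fun a2 _ =>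
          tendsto_const_nhds.mul (hσ2conv s a2))
      (fun a s' => by
        unfold lamMix2
        exact tendsto_finset_sum _ fun a2 _ =>
          tendsto_const_nhds.mul (hσ2conv s a2))
      hV1conv
  · intro s
    have h := sup_limit_aux (A := Unit) γ hγ Δ hΔpos hΔ0
      (fun n _ => rMixBoth r1 (σ1 n) (σ2 n) s) (fun _ => rMixBoth r1 σ1s σ2s s)
      (fun n _ s' => lamMixBoth lam (σ1 n) (σ2 n) s' s)
      (fun _ s' => lamMixBoth lam σ1s σ2s s' s)
      V1 V1s s
      (fun n => by rw [Finset.sup'_const]; exact hV1eval n s)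
      (fun _ => by
        unfold rMixBoth
        exact tendsto_finset_sum _ fun a1 _ => tendsto_finset_sum _ fun a2 _ =>
          (tendsto_const_nhds.mul (hσ1conv s a1)).mul (hσ2conv s a2))
      (fun _ s' => by
        unfold lamMixBoth
        exact tendsto_finset_sum _ fun a1 _ => tendsto_finset_sum _ fun a2 _ =>
          (tendsto_const_nhds.mul (hσ1conv s a1)).mul (hσ2conv s a2))
      hV1conv
    rwa [Finset.sup'_const] at h
  · intro s
    exact sup_limit_aux γ hγ Δ hΔpos hΔ0
      (fun n a => rMix1 r2 (σ1 n) s a) (fun a => rMix1 r2 σ1s s a)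
      (fun n a s' => lamMix1 lam (σ1 n) s' s a)
      (fun a s' => lamMix1 lam σ1s s' s a)
      V2 V2s s (fun n => hV2opt n s)
      (fun a => by
        unfold rMix1
        exact tendsto_finset_sum _ fun a1 _ =>
          tendsto_const_nhds.mul (hσ1conv s a1))
      (fun a s' => by
        unfold lamMix1
        exact tendsto_finset_sum _ fun a1 _ =>
          tendsto_const_nhds.mul (hσ1conv s a1))
      hV2conv
  · intro s
    have h := sup_limit_aux (A := Unit) γ hγ Δ hΔpos hΔ0
      (fun n _ => rMixBoth r2 (σ1 n) (σ2 n) s) (fun _ => rMixBoth r2 σ1s σ2s s)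
      (fun n _ s' => lamMixBoth lam (σ1 n) (σ2 n) s' s)
      (fun _ s' => lamMixBoth lam σ1s σ2s s' s)
      V2 V2s s
      (fun n => by rw [Finset.sup'_const]; exact hV2eval n s)
      (fun _ => by
        unfold rMixBoth
        exact tendsto_finset_sum _ fun a1 _ => tendsto_finset_sum _ fun a2 _ =>
          (tendsto_const_nhds.mul (hσ1conv s a1)).mul (hσ2conv s a2))
      (fun _ s' => by
        unfold lamMixBoth
        exact tendsto_finset_sum _ fun a1 _ => tendsto_finset_sum _ fun a2 _ =>
          (tendsto_const_nhds.mul (hσ1conv s a1)).mul (hσ2conv s a2))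
      hV2conv
    rwa [Finset.sup'_const] at h
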